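/- Let a ≥ 0, b > 0, 1 < γ < 2θ < p, θ > 1, and fix A, B, F, G ∈ ℝ with F > 0. For λ in an open interval I ⊂ (0,∞), suppose t⁻(λ) > 0 is a C¹ function satisfying the Nehari equation a t² A + b t^(2θ) B − λ t^γ F − t^p G = 0 at t = t⁻(λ) together with the strict second-order condition 2a t² A + 2θ b t^(2θ) B − γ λ t^γ F − p t^p G < 0 at t = t⁻(λ). Then λ ↦ t⁻(λ) is strictly decreasing on I, and λ ↦ ψ_λ(t⁻(λ)) is strictly decreasing on I, where ψ_λ(t) = (a t²/2)A + (b t^(2θ)/(2θ))B − (λ t^γ/γ)F − (t^p/p)G. -/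

import Mathlib

open Real Set

theorem stmt_15 (a b A B F G γ θ p lo hi : ℝ) (ha : 0 ≤ a) (hb : 0 < b) (hF : 0 < F)
    (hγ1 : 1 < γ) (hγθ : γ < 2 * θ) (hθp : 2 * θ < p) (hθ : 1 < θ)
    (hI : Set.Ioo lo hi ⊆ Set.Ioi (0 : ℝ))
    (tm : ℝ → ℝ) (htmC1 : ContDiffOn ℝ 1 tm (Set.Ioo lo hi))
    (htmpos : ∀ l ∈ Set.Ioo lo hi, 0 < tm l)
    (hNehari : ∀ l ∈ Set.Ioo lo hi,
      a * (tm l) ^ (2 : ℝ) * A + b * (tm l) ^ (2 * θ) * B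
        - l * (tm l) ^ γ * F - (tm l) ^ p * G = 0)
    (hSecond : ∀ l ∈ Set.Ioo lo hi,
      2 * a * (tm l) ^ (2 : ℝ) * A + 2 * θ * b * (tm l) ^ (2 * θ) * B
        - γ * l * (tm l) ^ γ * F - p * (tm l) ^ p * G < 0) :
    StrictAntiOn tm (Set.Ioo lo hi) ∧
    StrictAntiOn (fun l => a * (tm l) ^ (2 : ℝ) / 2 * A + b * (tm l) ^ (2 * θ) / (2 * θ) * B
      - l * (tm l) ^ γ / γ * F - (tm l) ^ p / p * G) (Set.Ioo lo hi) := by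
  have hγ0 : (0:ℝ) < γ := lt_trans one_pos hγ1
  have hθ0 : (0:ℝ) < 2*θ := by linarith
  have hp0 : (0:ℝ) < p := by linarith
  have hs : IsOpen (Set.Ioo lo hi) := isOpen_Ioo
  have hdiff : DifferentiableOn ℝ tm (Set.Ioo lo hi) := htmC1.differentiableOn one_ne_zero
  have key : ∀ l ∈ Set.Ioo lo hi, deriv tm l < 0 ∧
      HasDerivAt (fun l => a * (tm l) ^ (2 : ℝ) / 2 * A + b * (tm l) ^ (2 * θ) / (2 * θ) * B
        - l * (tm l) ^ γ / γ * F - (tm l) ^ p / p * G) (-(tm l ^ γ * F) / γ) l := by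
    intro l hl
    have ht : 0 < tm l := htmpos l hl
    have htne : tm l ≠ 0 := ne_of_gt ht
    have hld : DifferentiableAt ℝ tm l := hdiff.differentiableAt (hs.mem_nhds hl)
    have htm' : HasDerivAt tm (deriv tm l) l := hld.hasDerivAt
    set d := deriv tm l with hd
    set t := tm l with htdef
    have h2 : HasDerivAt (fun x => tm x ^ (2:ℝ)) (d * 2 * t ^ ((2:ℝ)-1)) l :=
      htm'.rpow_const (Or.inl htne)
    have hθ' : HasDerivAt (fun x => tm x ^ (2*θ)) (d * (2*θ) * t ^ (2*θ-1)) l :=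
      htm'.rpow_const (Or.inl htne)
    have hγ' : HasDerivAt (fun x => tm x ^ γ) (d * γ * t ^ (γ-1)) l :=
      htm'.rpow_const (Or.inl htne)
    have hp' : HasDerivAt (fun x => tm x ^ p) (d * p * t ^ (p-1)) l :=
      htm'.rpow_const (Or.inl htne)
    have hΦ : HasDerivAt (fun x => a * tm x ^ (2:ℝ) * A + b * tm x ^ (2*θ) * B
        - x * tm x ^ γ * F - tm x ^ p * G)
        (a * (d*2*t^((2:ℝ)-1)) * A + b * (d*(2*θ)*t^(2*θ-1)) * B
         - (1 * t ^ γ + l * (d*γ*t^(γ-1))) * F - d*p*t^(p-1) * G) l :=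
      ((((h2.const_mul a).mul_const A).add ((hθ'.const_mul b).mul_const B)).sub
        (((hasDerivAt_id l).mul hγ').mul_const F)).sub (hp'.mul_const G)
    have hΦ0 : HasDerivAt (fun x => a * tm x ^ (2:ℝ) * A + b * tm x ^ (2*θ) * B
        - x * tm x ^ γ * F - tm x ^ p * G) 0 l := by
      apply (hasDerivAt_const l (0:ℝ)).congr_of_eventuallyEq
      filter_upwards [hs.mem_nhds hl] with x hx
      exact hNehari x hx
    have heq := hΦ.unique hΦ0
    have e2 : t ^ ((2:ℝ)-1) = t ^ (2:ℝ) / t := by rw [rpow_sub ht, rpow_one]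
    have eθ : t ^ (2*θ-1) = t ^ (2*θ) / t := by rw [rpow_sub ht, rpow_one]
    have eγ : t ^ (γ-1) = t ^ γ / t := by rw [rpow_sub ht, rpow_one]
    have ep : t ^ (p-1) = t ^ p / t := by rw [rpow_sub ht, rpow_one]
    rw [e2, eθ, eγ, ep] at heq
    have hS := hSecond l hl
    have hγpos : 0 < t ^ γ := rpow_pos_of_pos ht γ
    have hdS : d * (2 * a * t ^ (2:ℝ) * A + 2 * θ * b * t ^ (2*θ) * B
        - γ * l * t ^ γ * F - p * t ^ p * G) = t * t ^ γ * F := by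
      field_simp at heq
      simp only [Real.rpow_two] at heq ⊢
      linear_combination heq
    have hdneg : d < 0 := by
      have hpos : 0 < d * (2 * a * t ^ (2:ℝ) * A + 2 * θ * b * t ^ (2*θ) * B
          - γ * l * t ^ γ * F - p * t ^ p * G) := by
        rw [hdS]; positivity
      rcases mul_pos_iff.mp hpos with ⟨_, h⟩ | ⟨h, _⟩
      · linarith
      · exact h
    refine ⟨hdneg, ?_⟩
    have hJ : HasDerivAt (fun x => a * tm x ^ (2:ℝ) / 2 * A + b * tm x ^ (2*θ) / (2*θ) * B
        - x * tm x ^ γ / γ * F - tm x ^ p / p * G)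
        (a * (d*2*t^((2:ℝ)-1)) / 2 * A + b * (d*(2*θ)*t^(2*θ-1)) / (2*θ) * B
         - (1 * t ^ γ + l * (d*γ*t^(γ-1))) / γ * F - d*p*t^(p-1) / p * G) l :=
      (((((h2.const_mul a).div_const 2).mul_const A).add
        (((hθ'.const_mul b).div_const (2*θ)).mul_const B)).sub
        ((((hasDerivAt_id l).mul hγ').div_const γ).mul_const F)).sub
        ((hp'.div_const p).mul_const G)
    have hval : a * (d*2*t^((2:ℝ)-1)) / 2 * A + b * (d*(2*θ)*t^(2*θ-1)) / (2*θ) * B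
         - (1 * t ^ γ + l * (d*γ*t^(γ-1))) / γ * F - d*p*t^(p-1) / p * G
         = -(t ^ γ * F) / γ := by
      have hNe := hNehari l hl
      rw [e2, eθ, eγ, ep]
      rw [← htdef] at hNe
      field_simp
      simp only [Real.rpow_two] at hNe ⊢
      linear_combination (d * γ) * hNe
    rw [hval] at hJ
    exact hJ
  constructor
  · apply strictAntiOn_of_deriv_neg (convex_Ioo lo hi) hdiff.continuousOn
    intro x hx
    rw [interior_Ioo] at hx
    exact (key x hx).1
  · have hJd : ∀ x ∈ Set.Ioo lo hi, HasDerivAt (fun l => a * (tm l) ^ (2 : ℝ) / 2 * A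
        + b * (tm l) ^ (2 * θ) / (2 * θ) * B
        - l * (tm l) ^ γ / γ * F - (tm l) ^ p / p * G) (-(tm x ^ γ * F) / γ) x :=
      fun x hx => (key x hx).2
    apply strictAntiOn_of_deriv_neg (convex_Ioo lo hi)
    · exact fun x hx => ((hJd x hx).differentiableAt.continuousAt).continuousWithinAt
    · intro x hx
      rw [interior_Ioo] at hx
      rw [(hJd x hx).deriv]
      have : 0 < tm x ^ γ * F := mul_pos (rpow_pos_of_pos (htmpos x hx) γ) hF
      exact div_neg_of_neg_of_pos (neg_neg_of_pos this) hγ0
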